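/- For each μ ∈ ℂ^n there exists a finite sequence μ = μ_0 < μ_1 < ⋯ < μ_s (possibly with s = 0) such that for each 0 ≤ j < s one has μ_{j+1} = s_{k_j} * μ_j for some 1 ≤ k_j ≤ n−1, and μ_s is W̃-maximal; that is, every weight is the starting point of an increasing W̃-string ending at a W̃-maximal weight. -/

import Mathlib

open Finset

/-- The 1-based `i`-th coordinate of a weight `λ ∈ ℂ^n` (0 if out of range). -/
def coord {n : ℕ} (lam : Fin n → ℂ) (i : ℕ) : ℂ :=
  if h : 1 ≤ i ∧ i ≤ n then lam ⟨i - 1, by omega⟩ else 0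

/-- The star action of the generator `s_i` (1 ≤ i ≤ n-1) on weights:
swap coordinates `i` and `i+1` if their sum is nonzero, otherwise replace
`(λ_i, λ_{i+1})` by `(λ_{i+1} - 1, λ_i + 1)`. -/
noncomputable def sStar {n : ℕ} (i : ℕ) (lam : Fin n → ℂ) : Fin n → ℂ := fun j =>
  if (j : ℕ) + 1 = i then
    (if coord lam i + coord lam (i + 1) = 0 then coord lam (i + 1) - 1 else coord lam (i + 1))
  else if (j : ℕ) = i then
    (if coord lam i + coord lam (i + 1) = 0 then coord lam i + 1 else coord lam i)
  else lam j

/-- The partial order on weights: `μ ≤ ν` iff each partial sum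
`Σ_{j=1}^i (ν_j - μ_j)` (1 ≤ i ≤ n-1) is a nonnegative integer and the
total sum `Σ_{j=1}^n (ν_j - μ_j)` is zero. -/
def wle {n : ℕ} (mu nu : Fin n → ℂ) : Prop :=
  (∀ i : ℕ, 1 ≤ i → i ≤ n - 1 →
    ∃ m : ℕ, ∑ j ∈ Finset.Icc 1 i, (coord nu j - coord mu j) = (m : ℂ)) ∧
  ∑ j ∈ Finset.Icc 1 n, (coord nu j - coord mu j) = 0

/-- Strict inequality of weights. -/
def wlt {n : ℕ} (mu nu : Fin n → ℂ) : Prop := wle mu nu ∧ mu ≠ nu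

/-- `a ≻ b` iff `a - b ∈ ℤ_{>0}` or `a = b = 0`. -/
def csucc (a b : ℂ) : Prop := (∃ m : ℤ, 0 < m ∧ a - b = (m : ℂ)) ∨ (a = 0 ∧ b = 0)

/-- `starDesc j k λ = s_j s_{j+1} ⋯ s_k * λ` (apply `s_k` first, `s_j` last);
equals `λ` when `j > k`. -/
noncomputable def starDesc {n : ℕ} (j k : ℕ) (lam : Fin n → ℂ) : Fin n → ℂ :=
  (List.range' j (k + 1 - j)).foldr (fun i mu => sStar i mu) lam

/-- `starAsc j k λ = s_k s_{k-1} ⋯ s_j * λ` (apply `s_j` first, `s_k` last);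
equals `λ` when `j > k`. -/
noncomputable def starAsc {n : ℕ} (j k : ℕ) (lam : Fin n → ℂ) : Fin n → ℂ :=
  (List.range' j (k + 1 - j)).foldl (fun mu i => sStar i mu) lam

lemma coord_eq {n : ℕ} (lam : Fin n → ℂ) (i : ℕ) (h1 : 1 ≤ i) (h2 : i ≤ n) :
    coord lam i = lam ⟨i - 1, by omega⟩ := by
  simp [coord, h1, h2]

lemma coord_fin {n : ℕ} (lam : Fin n → ℂ) (j : Fin n) :
    coord lam ((j : ℕ) + 1) = lam j := by
  rw [coord_eq lam _ (by omega) (by omega)]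
  congr 1

lemma coord_sStar_ne {n : ℕ} {k i : ℕ} (hi1 : 1 ≤ i) (hin : i ≤ n)
    (h1 : i ≠ k) (h2 : i ≠ k + 1) (lam : Fin n → ℂ) :
    coord (sStar k lam) i = coord lam i := by
  rw [coord_eq _ i hi1 hin, coord_eq _ i hi1 hin]
  show (if (i - 1) + 1 = k then _ else if (i - 1) = k then _ else _) = _
  rw [if_neg (by omega), if_neg (by omega)]

lemma coord_sStar_k {n : ℕ} {k : ℕ} (hk1 : 1 ≤ k) (hkn : k ≤ n) (lam : Fin n → ℂ) :
    coord (sStar k lam) k =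
      if coord lam k + coord lam (k + 1) = 0 then coord lam (k + 1) - 1
      else coord lam (k + 1) := by
  rw [coord_eq _ k hk1 hkn]
  show (if (k - 1) + 1 = k then _ else if (k - 1) = k then _ else _) = _
  rw [if_pos (by omega)]

lemma coord_sStar_k1 {n : ℕ} {k : ℕ} (hk1 : 1 ≤ k) (hkn : k + 1 ≤ n) (lam : Fin n → ℂ) :
    coord (sStar k lam) (k + 1) =
      if coord lam k + coord lam (k + 1) = 0 then coord lam k + 1
      else coord lam k := by
  rw [coord_eq _ (k + 1) (by omega) hkn]
  show (if (k + 1 - 1) + 1 = k then _ else if (k + 1 - 1) = k then _ else _) = _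
  rw [if_neg (by omega), if_pos (by omega)]

lemma absOK {n : ℕ} {k : ℕ} (hk1 : 1 ≤ k) (hk2 : k ≤ n - 1) (hn : 2 ≤ n)
    {lam : Fin n → ℂ} {C : ℝ} (hC : ∀ j, ‖lam j‖ ≤ C)
    (hw : wle lam (sStar k lam)) : ∀ j, ‖sStar k lam j‖ ≤ C := by
  have hkn : k + 1 ≤ n := by omega
  have hck1 : coord lam (k + 1) = lam ⟨k, by omega⟩ := by
    rw [coord_eq _ _ (by omega) hkn]; congr 1
  have hck : coord lam k = lam ⟨k - 1, by omega⟩ := coord_eq _ _ hk1 (by omega)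
  by_cases h0 : coord lam k + coord lam (k + 1) = 0
  · -- degenerate case
    obtain ⟨m, hm⟩ := hw.1 k hk1 hk2
    have hsum : ∑ j ∈ Finset.Icc 1 k, (coord (sStar k lam) j - coord lam j)
        = coord (sStar k lam) k - coord lam k := by
      apply Finset.sum_eq_single_of_mem k (Finset.mem_Icc.mpr ⟨hk1, le_refl k⟩)
      intro b hb hbk
      rw [Finset.mem_Icc] at hb
      rw [coord_sStar_ne hb.1 (by omega) hbk (by omega)]
      ring
    rw [hsum, coord_sStar_k hk1 (by omega), if_pos h0] at hm
    have hlk : coord lam k = -((m : ℂ) + 1) / 2 := by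
      linear_combination (-1/2 : ℂ) * hm + (1/2 : ℂ) * h0
    have hlk1 : coord lam (k + 1) = ((m : ℂ) + 1) / 2 := by linear_combination h0 - hlk
    have habs : ‖coord lam k‖ = ((m : ℝ) + 1) / 2 := by
      rw [hlk]
      rw [show -((m : ℂ) + 1) / 2 = ((-(((m : ℝ)) + 1) / 2 : ℝ) : ℂ) by push_cast; ring]
      rw [Complex.norm_real, Real.norm_eq_abs]
      have hm0 : (0:ℝ) ≤ (m:ℝ) := Nat.cast_nonneg m
      rw [abs_of_nonpos (by linarith)]
      ring
    have hCm : ((m : ℝ) + 1) / 2 ≤ C := habs ▸ (hck ▸ hC _)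
    have habs2 : ‖((m : ℂ) - 1) / 2‖ ≤ ((m : ℝ) + 1) / 2 := by
      rw [show ((m : ℂ) - 1) / 2 = (((((m : ℝ)) - 1) / 2 : ℝ) : ℂ) by push_cast; ring]
      rw [Complex.norm_real, Real.norm_eq_abs]
      rw [abs_div, abs_of_nonneg (by norm_num : (0:ℝ) ≤ 2)]
      have hm0 : (0:ℝ) ≤ (m:ℝ) := Nat.cast_nonneg m
      have : |(m : ℝ) - 1| ≤ (m : ℝ) + 1 := by
        rw [abs_le]; constructor <;> linarith
      linarith
    intro j
    show ‖(if (j : ℕ) + 1 = k then _ else if (j : ℕ) = k then _ else lam j)‖ ≤ C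
    split_ifs with h1 h2
    · have : coord lam (k + 1) - 1 = ((m : ℂ) - 1) / 2 := by rw [hlk1]; ring
      rw [this]; linarith
    · have : coord lam k + 1 = -(((m : ℂ) - 1) / 2) := by rw [hlk]; ring
      rw [this, norm_neg]; linarith
    · exact hC j
  · -- swap case
    intro j
    show ‖(if (j : ℕ) + 1 = k then _ else if (j : ℕ) = k then _ else lam j)‖ ≤ C
    split_ifs with h1 h2
    · rw [hck1]; exact hC _
    · rw [hck]; exact hC _
    · exact hC j

noncomputable def Sfun {n : ℕ} (lam : Fin n → ℂ) : ℝ :=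
  ∑ i ∈ Finset.Icc 1 (n - 1), (∑ j ∈ Finset.Icc 1 i, coord lam j).re

lemma step_S {n : ℕ} {mu nu : Fin n → ℂ} (h : wlt mu nu) : Sfun mu + 1 ≤ Sfun nu := by
  obtain ⟨⟨hps, htot⟩, hne⟩ := h
  choose f hf using hps
  set g : ℕ → ℕ := fun i => if h : 1 ≤ i ∧ i ≤ n - 1 then f i h.1 h.2 else 0 with hg_def
  have hg : ∀ i ∈ Finset.Icc 1 (n - 1),
      ∑ j ∈ Finset.Icc 1 i, (coord nu j - coord mu j) = (g i : ℂ) := by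
    intro i hi
    rw [Finset.mem_Icc] at hi
    simp only [hg_def, dif_pos (And.intro hi.1 hi.2)]
    exact hf i hi.1 hi.2
  have hne' : ∃ i ∈ Finset.Icc 1 (n - 1), g i ≠ 0 := by
    by_contra hc
    push_neg at hc
    have hQ : ∀ i, i ≤ n - 1 → ∑ j ∈ Finset.Icc 1 i, (coord nu j - coord mu j) = 0 := by
      intro i hi
      rcases Nat.eq_zero_or_pos i with rfl | hip
      · simp
      · rw [hg i (Finset.mem_Icc.mpr ⟨hip, hi⟩), hc i (Finset.mem_Icc.mpr ⟨hip, hi⟩)]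
        simp
    have hD : ∀ j, 1 ≤ j → j ≤ n → coord nu j - coord mu j = 0 := by
      intro j hj1 hjn
      obtain ⟨i, rfl⟩ : ∃ i, j = i + 1 := ⟨j - 1, by omega⟩
      have hstep : ∑ t ∈ Finset.Icc 1 (i + 1), (coord nu t - coord mu t)
          = ∑ t ∈ Finset.Icc 1 i, (coord nu t - coord mu t)
            + (coord nu (i + 1) - coord mu (i + 1)) :=
        Finset.sum_Icc_succ_top (by omega) _
      have h1 : ∑ t ∈ Finset.Icc 1 (i + 1), (coord nu t - coord mu t) = 0 := by
        rcases Nat.lt_or_ge (i + 1) n with hlt | hge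
        · exact hQ (i + 1) (by omega)
        · have : i + 1 = n := by omega
          rw [this]; exact htot
      have h2 : ∑ t ∈ Finset.Icc 1 i, (coord nu t - coord mu t) = 0 := hQ i (by omega)
      rw [h1, h2] at hstep
      linear_combination -hstep
    apply hne
    funext j
    have := hD ((j : ℕ) + 1) (by omega) (by omega)
    rw [coord_fin, coord_fin] at this
    linear_combination -this
  have hdiff : Sfun nu - Sfun mu = ∑ i ∈ Finset.Icc 1 (n - 1), (g i : ℝ) := by
    rw [Sfun, Sfun, ← Finset.sum_sub_distrib]
    apply Finset.sum_congr rfl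
    intro i hi
    have := hg i hi
    rw [← Complex.sub_re, ← Finset.sum_sub_distrib, this]
    simp
  obtain ⟨i0, hi0, hgi0⟩ := hne'
  have h1 : (1 : ℝ) ≤ (g i0 : ℝ) := by exact_mod_cast Nat.one_le_iff_ne_zero.mpr hgi0
  have h2 : (g i0 : ℝ) ≤ ∑ i ∈ Finset.Icc 1 (n - 1), (g i : ℝ) :=
    Finset.single_le_sum (f := fun i => (g i : ℝ)) (fun i _ => Nat.cast_nonneg (g i)) hi0
  linarith

lemma S_le {n : ℕ} {C : ℝ} (hC : 0 ≤ C) {mu : Fin n → ℂ}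
    (h : ∀ j, ‖mu j‖ ≤ C) : Sfun mu ≤ (n : ℝ) * ((n : ℝ) * C) := by
  have hterm : ∀ i ∈ Finset.Icc 1 (n - 1), (∑ j ∈ Finset.Icc 1 i, coord mu j).re ≤ (n : ℝ) * C := by
    intro i hi
    rw [Finset.mem_Icc] at hi
    calc (∑ j ∈ Finset.Icc 1 i, coord mu j).re
        ≤ ‖∑ j ∈ Finset.Icc 1 i, coord mu j‖ := Complex.re_le_norm _
      _ ≤ ∑ j ∈ Finset.Icc 1 i, ‖coord mu j‖ := norm_sum_le _ _
      _ ≤ ∑ j ∈ Finset.Icc 1 i, C := by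
          apply Finset.sum_le_sum
          intro j hj
          rw [Finset.mem_Icc] at hj
          rw [coord_eq mu j hj.1 (by omega)]
          exact h _
      _ = (i : ℝ) * C := by rw [Finset.sum_const, Nat.card_Icc]; simp [nsmul_eq_mul]
      _ ≤ (n : ℝ) * C := by
          apply mul_le_mul_of_nonneg_right _ hC
          exact_mod_cast Nat.le_of_lt_succ (by omega)
  calc Sfun mu ≤ ∑ _i ∈ Finset.Icc 1 (n - 1), (n : ℝ) * C := Finset.sum_le_sum hterm
    _ = ((n - 1 : ℕ) : ℝ) * ((n : ℝ) * C) := by rw [Finset.sum_const, Nat.card_Icc]; simp [nsmul_eq_mul]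
    _ ≤ (n : ℝ) * ((n : ℝ) * C) := by
        apply mul_le_mul_of_nonneg_right _ (by positivity)
        exact_mod_cast Nat.sub_le n 1

lemma mainrec {n : ℕ} (hn : 2 ≤ n) (C : ℝ) (hC0 : 0 ≤ C) :
    ∀ d : ℕ, ∀ mu : Fin n → ℂ, (∀ j, ‖mu j‖ ≤ C) →
      ((n : ℝ) * ((n : ℝ) * C) ≤ Sfun mu + d) →
      ∃ (s : ℕ) (nu : ℕ → Fin n → ℂ),
        nu 0 = mu ∧
        (∀ j, j < s →
          ∃ k, 1 ≤ k ∧ k ≤ n - 1 ∧ nu (j + 1) = sStar k (nu j) ∧ wlt (nu j) (nu (j + 1))) ∧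
        (∀ i, 1 ≤ i → i ≤ n - 1 → ¬ wlt (nu s) (sStar i (nu s))) := by
  intro d
  induction d with
  | zero =>
    intro mu hb hd
    refine ⟨0, fun _ => mu, rfl, fun j hj => absurd hj (Nat.not_lt_zero j), ?_⟩
    intro i hi1 hi2 hcon
    have h1 := step_S hcon
    have h2 := S_le hC0 (absOK hi1 hi2 hn hb hcon.1)
    push_cast at hd
    linarith
  | succ d ih =>
    intro mu hb hd
    by_cases hmax : ∀ i, 1 ≤ i → i ≤ n - 1 → ¬ wlt mu (sStar i mu)
    · exact ⟨0, fun _ => mu, rfl, fun j hj => absurd hj (Nat.not_lt_zero j), hmax⟩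
    · push_neg at hmax
      obtain ⟨k, hk1, hk2, hw⟩ := hmax
      have hb' := absOK hk1 hk2 hn hb hw.1
      have hS := step_S hw
      obtain ⟨s, nu, h0, hchain, hmaxs⟩ := ih (sStar k mu) hb' (by push_cast at hd ⊢; linarith)
      refine ⟨s + 1, fun j => if j = 0 then mu else nu (j - 1), by simp, ?_, ?_⟩
      · intro j hj
        rcases Nat.eq_zero_or_pos j with rfl | hjpos
        · refine ⟨k, hk1, hk2, ?_, ?_⟩
          · simp [h0]
          · simpa [h0] using hw
        · obtain ⟨t, rfl⟩ : ∃ t, j = t + 1 := ⟨j - 1, by omega⟩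
          obtain ⟨k', hk'1, hk'2, he, hlt⟩ := hchain t (by omega)
          refine ⟨k', hk'1, hk'2, ?_, ?_⟩
          · simpa using he
          · simpa using hlt
      · intro i h1 h2
        simpa using hmaxs i h1 h2

theorem stmt4 (n : ℕ) (hn : 2 ≤ n) (mu : Fin n → ℂ) :
    ∃ (s : ℕ) (nu : ℕ → Fin n → ℂ),
      nu 0 = mu ∧
      (∀ j, j < s →
        ∃ k, 1 ≤ k ∧ k ≤ n - 1 ∧ nu (j + 1) = sStar k (nu j) ∧ wlt (nu j) (nu (j + 1))) ∧
      (∀ i, 1 ≤ i → i ≤ n - 1 → ¬ wlt (nu s) (sStar i (nu s))) := by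
  set C : ℝ := ∑ j : Fin n, ‖mu j‖ with hC_def
  have hC0 : 0 ≤ C := Finset.sum_nonneg fun j _ => norm_nonneg _
  have hb : ∀ j, ‖mu j‖ ≤ C := fun j =>
    Finset.single_le_sum (f := fun j => ‖mu j‖)
      (fun i _ => norm_nonneg _) (Finset.mem_univ j)
  have hd : (n : ℝ) * ((n : ℝ) * C) ≤ Sfun mu + (⌈(n : ℝ) * ((n : ℝ) * C) - Sfun mu⌉₊ : ℕ) := by
    have := Nat.le_ceil ((n : ℝ) * ((n : ℝ) * C) - Sfun mu)
    linarith
  exact mainrec hn C hC0 _ mu hb hd
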